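/- In the harmonic decomposition p = Σ_{k=0}^{r} qᵏ h_k of a homogeneous polynomial p of degree n on ℝ³, the top harmonic component is h_r = (1/(2r+1)!)·Δʳp if n = 2r is even, and h_r = (3!(r+1)/(2r+3)!)·Δʳp if n = 2r+1 is odd. -/

import Mathlib

open scoped BigOperators

/-- The Laplacian on polynomials in three variables. -/
noncomputable def polyLaplacian (p : MvPolynomial (Fin 3) ℝ) : MvPolynomial (Fin 3) ℝ :=
  ∑ i : Fin 3, MvPolynomial.pderiv i (MvPolynomial.pderiv i p)

/-- The quadratic form `q(x,y,z) = x² + y² + z²` as a polynomial. -/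
noncomputable def qPoly : MvPolynomial (Fin 3) ℝ :=
  MvPolynomial.X 0 ^ 2 + MvPolynomial.X 1 ^ 2 + MvPolynomial.X 2 ^ 2

section Aux
open MvPolynomial Finsupp

lemma lap_smul (c : ℝ) (p : MvPolynomial (Fin 3) ℝ) :
    polyLaplacian (c • p) = c • polyLaplacian p := by
  simp [polyLaplacian, Finset.smul_sum]

lemma lap_zero : polyLaplacian (0 : MvPolynomial (Fin 3) ℝ) = 0 := by simp [polyLaplacian]

lemma iter_lap_smul (m : ℕ) (c : ℝ) (p : MvPolynomial (Fin 3) ℝ) :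
    polyLaplacian^[m] (c • p) = c • polyLaplacian^[m] p := by
  induction m generalizing p with
  | zero => simp
  | succ m ih => rw [Function.iterate_succ_apply, lap_smul, ih, Function.iterate_succ_apply]

lemma iter_lap_zero (m : ℕ) : polyLaplacian^[m] (0 : MvPolynomial (Fin 3) ℝ) = 0 :=
  Function.iterate_fixed lap_zero m

lemma lap_sum {α : Type*} (s : Finset α) (f : α → MvPolynomial (Fin 3) ℝ) :
    polyLaplacian (∑ a ∈ s, f a) = ∑ a ∈ s, polyLaplacian (f a) := by
  simp [polyLaplacian, map_sum]; exact Finset.sum_comm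

lemma iter_lap_sum {α : Type*} (m : ℕ) (s : Finset α) (f : α → MvPolynomial (Fin 3) ℝ) :
    polyLaplacian^[m] (∑ a ∈ s, f a) = ∑ a ∈ s, polyLaplacian^[m] (f a) := by
  induction m generalizing f with
  | zero => simp
  | succ m ih =>
    rw [Function.iterate_succ_apply, lap_sum, ih]
    simp [Function.iterate_succ_apply]

lemma pderiv_qPoly (i : Fin 3) : pderiv i qPoly = 2 * X i := by
  fin_cases i <;>
    simp [qPoly, pderiv_X, Pi.single_apply]

lemma pderiv_two (i : Fin 3) : pderiv i (2 : MvPolynomial (Fin 3) ℝ) = 0 := by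
  rw [← map_ofNat (C : ℝ →+* MvPolynomial (Fin 3) ℝ) 2, pderiv_C]

lemma lap_qPoly : polyLaplacian qPoly = 6 := by
  simp [polyLaplacian, pderiv_qPoly, pderiv_two]
  norm_num

lemma lap_mul (f g : MvPolynomial (Fin 3) ℝ) :
    polyLaplacian (f * g) = polyLaplacian f * g
      + 2 * ∑ i : Fin 3, pderiv i f * pderiv i g + f * polyLaplacian g := by
  have e : ∀ i : Fin 3, pderiv i (pderiv i (f * g)) =
      pderiv i (pderiv i f) * g + 2 * (pderiv i f * pderiv i g)
        + f * pderiv i (pderiv i g) := by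
    intro i; simp only [pderiv_mul, map_add]; ring
  simp only [polyLaplacian, e, Finset.sum_add_distrib, ← Finset.sum_mul, ← Finset.mul_sum]


-- Euler identity
lemma euler_id {d : ℕ} {g : MvPolynomial (Fin 3) ℝ} (hg : g.IsHomogeneous d) :
    ∑ i : Fin 3, X i * pderiv i g = (d : ℝ) • g := by
  have key : ∀ v ∈ g.support, ∑ i : Fin 3, X i * pderiv i (monomial v (coeff v g))
      = (d : ℝ) • monomial v (coeff v g) := by
    intro v hv
    have hdeg : ∑ i : Fin 3, v i = d := by
      have := hg (MvPolynomial.mem_support_iff.mp hv)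
      rw [← this, show (weight 1) v = weight (fun _ : Fin 3 ↦ (1 : ℕ)) v from rfl,
        ← degree_eq_weight_one, Finsupp.degree_apply]
      exact (Finset.sum_subset (Finset.subset_univ _) (by
        intro x _ hx; simpa using Finsupp.notMem_support_iff.mp hx)).symm
    have single : ∀ i : Fin 3, X i * pderiv i (monomial v (coeff v g))
        = (v i : ℝ) • monomial v (coeff v g) := by
      intro i
      rw [pderiv_monomial]
      by_cases hvi : v i = 0
      · simp [hvi]
      · rw [X, monomial_mul, smul_monomial]
        congr 1
        · rw [add_comm, tsub_add_cancel_of_le]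
          exact Finsupp.single_le_iff.mpr (Nat.one_le_iff_ne_zero.mpr hvi)
        · rw [one_mul, mul_comm]; simp
    rw [Finset.sum_congr rfl (fun i _ => single i), ← Finset.sum_smul, ← hdeg]
    push_cast
    rfl
  conv_lhs => rw [g.as_sum]
  simp only [map_sum, Finset.mul_sum]
  rw [Finset.sum_comm, Finset.sum_congr rfl key, ← Finset.smul_sum, ← g.as_sum]

lemma qPoly_homog : qPoly.IsHomogeneous 2 := by
  unfold qPoly
  exact (((isHomogeneous_X ℝ 0).pow 2).add ((isHomogeneous_X ℝ 1).pow 2)).add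
    ((isHomogeneous_X ℝ 2).pow 2)

lemma lap_q_mul {d : ℕ} {g : MvPolynomial (Fin 3) ℝ} (hg : g.IsHomogeneous d) :
    polyLaplacian (qPoly * g) = ((4 * d + 6 : ℕ) : ℝ) • g + qPoly * polyLaplacian g := by
  rw [lap_mul, lap_qPoly]
  have : ∑ i : Fin 3, pderiv i qPoly * pderiv i g = 2 * ∑ i : Fin 3, X i * pderiv i g := by
    rw [Finset.mul_sum]
    exact Finset.sum_congr rfl fun i _ => by rw [pderiv_qPoly]; ring
  rw [this, euler_id hg]
  rw [smul_eq_C_mul, smul_eq_C_mul]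
  push_cast
  simp only [map_add, map_mul, map_ofNat]
  ring

lemma lap_qpow_mul {d : ℕ} {g : MvPolynomial (Fin 3) ℝ} (hg : g.IsHomogeneous d)
    (hlap : polyLaplacian g = 0) (k : ℕ) :
    polyLaplacian (qPoly ^ (k + 1) * g)
      = ((2 * (k + 1) * (2 * d + 2 * k + 3) : ℕ) : ℝ) • (qPoly ^ k * g) := by
  induction k with
  | zero =>
    rw [pow_one, pow_zero, one_mul, lap_q_mul hg, hlap, mul_zero, add_zero]
    congr 1
    push_cast; ring
  | succ k ih =>
    have hgk : (qPoly ^ (k + 1) * g).IsHomogeneous (2 * (k + 1) + d) :=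
      (qPoly_homog.pow (k + 1)).mul hg
    have : qPoly ^ (k + 2) * g = qPoly * (qPoly ^ (k + 1) * g) := by ring
    rw [this, lap_q_mul hgk, ih, smul_eq_C_mul, smul_eq_C_mul, smul_eq_C_mul]
    push_cast
    simp only [map_add, map_mul, map_ofNat, map_pow, map_one]
    ring

lemma iter_lap_qpow {d : ℕ} {g : MvPolynomial (Fin 3) ℝ} (hg : g.IsHomogeneous d)
    (hlap : polyLaplacian g = 0) (k : ℕ) :
    polyLaplacian^[k] (qPoly ^ k * g)
      = ((∏ j ∈ Finset.range k, (2 * (j + 1) * (2 * d + 2 * j + 3)) : ℕ) : ℝ) • g := by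
  induction k with
  | zero => simp
  | succ k ih =>
    rw [Function.iterate_succ_apply, lap_qpow_mul hg hlap, iter_lap_smul, ih,
      smul_smul, Finset.prod_range_succ]
    congr 1
    push_cast
    ring

lemma iter_lap_qpow_zero {d : ℕ} {g : MvPolynomial (Fin 3) ℝ} (hg : g.IsHomogeneous d)
    (hlap : polyLaplacian g = 0) (k m : ℕ) :
    polyLaplacian^[k + (m + 1)] (qPoly ^ k * g) = 0 := by
  rw [add_comm, Function.iterate_add_apply, iter_lap_qpow hg hlap, iter_lap_smul,
    Function.iterate_succ_apply, hlap, iter_lap_zero, smul_zero]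

lemma prod_even (r : ℕ) :
    ∏ j ∈ Finset.range r, (2 * (j + 1) * (2 * j + 3)) = (2 * r + 1).factorial := by
  induction r with
  | zero => simp
  | succ r ih =>
    rw [Finset.prod_range_succ, show 2 * (r + 1) + 1 = (2 * r + 1) + 1 + 1 from by ring,
      Nat.factorial_succ, Nat.factorial_succ, ← ih]
    ring

lemma iter_zero_of_lt {d : ℕ} {g : MvPolynomial (Fin 3) ℝ} (hg : g.IsHomogeneous d)
    (hlap : polyLaplacian g = 0) {j m : ℕ} (hjm : j < m) :
    polyLaplacian^[m] (qPoly ^ j * g) = 0 := by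
  obtain ⟨t, rfl⟩ : ∃ t, m = j + (t + 1) := ⟨m - j - 1, by omega⟩
  exact iter_lap_qpow_zero hg hlap j t

lemma prod_odd (r : ℕ) :
    6 * (r + 1) * ∏ j ∈ Finset.range r, (2 * (j + 1) * (2 * j + 5)) = (2 * r + 3).factorial := by
  induction r with
  | zero => simp [Nat.factorial]
  | succ r ih =>
    rw [Finset.prod_range_succ, show 2 * (r + 1) + 3 = (2 * r + 3) + 1 + 1 from by ring,
      Nat.factorial_succ, Nat.factorial_succ, ← ih]
    ring

end Aux

open MvPolynomial Finsupp in
/-- In the harmonic decomposition `p = Σ qᵏ h_k` of a homogeneous polynomial of degree `n`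
on `ℝ³`, the top harmonic component is `h_r = (1/(2r+1)!)·Δʳp` if `n = 2r`, and
`h_r = (3!(r+1)/(2r+3)!)·Δʳp` if `n = 2r+1`. -/
theorem harmonic_decomposition_top_component (n : ℕ) (p : MvPolynomial (Fin 3) ℝ)
    (hp : p.IsHomogeneous n) (h : Fin (n / 2 + 1) → MvPolynomial (Fin 3) ℝ)
    (hh : ∀ k : Fin (n / 2 + 1),
      (h k).IsHomogeneous (n - 2 * (k : ℕ)) ∧ polyLaplacian (h k) = 0)
    (hdec : p = ∑ k : Fin (n / 2 + 1), qPoly ^ (k : ℕ) * h k) :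
    (∀ r : ℕ, n = 2 * r →
      h (Fin.last (n / 2)) =
        ((1 : ℝ) / (2 * r + 1).factorial) • polyLaplacian^[r] p) ∧
    (∀ r : ℕ, n = 2 * r + 1 →
      h (Fin.last (n / 2)) =
        ((6 * (r + 1) : ℝ) / (2 * r + 3).factorial) • polyLaplacian^[r] p) := by
  have key : polyLaplacian^[n / 2] p
      = ((∏ j ∈ Finset.range (n / 2),
          (2 * (j + 1) * (2 * (n - 2 * (n / 2)) + 2 * j + 3)) : ℕ) : ℝ)
        • h (Fin.last (n / 2)) := by
    rw [hdec, iter_lap_sum, Fin.sum_univ_castSucc]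
    have zero_terms : ∀ k : Fin (n / 2),
        polyLaplacian^[n / 2]
          (qPoly ^ ((Fin.castSucc k : Fin (n / 2 + 1)) : ℕ) * h (Fin.castSucc k)) = 0 := by
      intro k
      have hk := hh (Fin.castSucc k)
      rw [Fin.coe_castSucc]
      exact iter_zero_of_lt hk.1 hk.2 k.isLt
    rw [Finset.sum_congr rfl (fun k _ => zero_terms k), Finset.sum_const_zero, zero_add,
      Fin.val_last]
    exact iter_lap_qpow (hh (Fin.last (n / 2))).1 (hh (Fin.last (n / 2))).2 (n / 2)
  constructor
  · intro r hr
    have hm : n / 2 = r := by omega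
    have hd : n - 2 * (n / 2) = 0 := by omega
    rw [hd] at key
    have hprod : (∏ j ∈ Finset.range (n / 2),
        (2 * (j + 1) * (2 * 0 + 2 * j + 3))) = (2 * r + 1).factorial := by
      rw [hm, ← prod_even r]
      exact Finset.prod_congr rfl fun j _ => by ring
    rw [hprod] at key
    rw [show polyLaplacian^[r] p = polyLaplacian^[n / 2] p from by rw [hm], key, smul_smul,
      one_div_mul_cancel (Nat.cast_ne_zero.mpr (2 * r + 1).factorial_ne_zero), one_smul]
  · intro r hr
    have hm : n / 2 = r := by omega
    have hd : n - 2 * (n / 2) = 1 := by omega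
    rw [hd] at key
    have hprod : (∏ j ∈ Finset.range (n / 2),
        (2 * (j + 1) * (2 * 1 + 2 * j + 3)))
        = ∏ j ∈ Finset.range r, (2 * (j + 1) * (2 * j + 5)) := by
      rw [hm]
      exact Finset.prod_congr rfl fun j _ => by ring
    rw [hprod] at key
    have hsc : (6 * ((r : ℝ) + 1) / ((2 * r + 3).factorial : ℝ))
        * ((∏ j ∈ Finset.range r, (2 * (j + 1) * (2 * j + 5)) : ℕ) : ℝ) = 1 := by
      have hcast : (6 * ((r : ℝ) + 1))
          * ((∏ j ∈ Finset.range r, (2 * (j + 1) * (2 * j + 5)) : ℕ) : ℝ)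
          = ((2 * r + 3).factorial : ℝ) := by
        exact_mod_cast congrArg (Nat.cast : ℕ → ℝ) (prod_odd r)
      rw [div_mul_eq_mul_div, hcast,
        div_self (Nat.cast_ne_zero.mpr (2 * r + 3).factorial_ne_zero)]
    rw [show polyLaplacian^[r] p = polyLaplacian^[n / 2] p from by rw [hm], key, smul_smul,
      hsc, one_smul]
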